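/- Let 0 < α < 1 and β > 0, let φ be an analytic self-map of the open unit disk D, and let g be analytic on D. Then the operator C_φV_g, defined by (C_φV_g f)(z) = ∫₀^{φ(z)} f'(ξ) g(ξ) dξ, is bounded from Z^α to Z^β if and only if (g∘φ)·φ'' + (g'∘φ)·(φ')² ∈ H_{v_β}^∞ and sup_{z∈D} (1−|z|²)^β |g(φ(z)) (φ'(z))²| / (1−|φ(z)|²)^α < ∞. -/

import Mathlib

noncomputable section

/-- The open unit disk in the complex plane. -/
def uD : Set ℂ := Metric.ball 0 1

/-- The Zygmund-type quantity `(1-|z|^2)^a * |f''(z)|`. -/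
def zygS (a : ℝ) (f : ℂ → ℂ) (z : ℂ) : ℝ := (1 - ‖z‖ ^ 2) ^ a * ‖deriv (deriv f) z‖

/-- Membership in the Zygmund-type space `Z^a`. -/
def memZ (a : ℝ) (f : ℂ → ℂ) : Prop :=
  AnalyticOn ℂ f uD ∧ ∃ M : ℝ, ∀ z ∈ uD, zygS a f z ≤ M

/-- The Zygmund-type norm `‖f‖_{Z^a} = |f 0| + |f' 0| + sup_{z ∈ D} (1-|z|^2)^a |f''(z)|`. -/
def zNorm (a : ℝ) (f : ℂ → ℂ) : ℝ := ‖f 0‖ + ‖deriv f 0‖ + sSup (zygS a f '' uD)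

/-- Membership in the weighted space `H^∞_{v_b}` (for `u` analytic on `uD`). -/
def memHv (b : ℝ) (u : ℂ → ℂ) : Prop :=
  ∃ M : ℝ, ∀ z ∈ uD, (1 - ‖z‖ ^ 2) ^ b * ‖u z‖ ≤ M

/-- `T` is a bounded operator from `Z^a` to `Z^b`. -/
def boundedOp (a b : ℝ) (T : (ℂ → ℂ) → ℂ → ℂ) : Prop :=
  (∀ f, memZ a f → memZ b (T f)) ∧
    ∃ C > 0, ∀ f, memZ a f → zNorm b (T f) ≤ C * zNorm a f

/-- `(C_φ V_g f)(z) = ∫₀^{φ(z)} f'(ξ) g(ξ) dξ`, parametrized along the segment from `0` to `φ z`. -/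
def CphiVg (g φ : ℂ → ℂ) (f : ℂ → ℂ) : ℂ → ℂ :=
  fun z => ∫ t in (0:ℝ)..1, φ z * (deriv f ((t : ℂ) * φ z) * g ((t : ℂ) * φ z))


open Metric MeasureTheory intervalIntegral Set Filter Topology
open scoped Interval

/-- primitive of h vanishing at 0 -/
def prim (h : ℂ → ℂ) : ℂ → ℂ := fun w => ∫ t in (0:ℝ)..1, w * h ((t:ℂ) * w)



lemma uD_open : IsOpen uD := Metric.isOpen_ball
lemma zero_mem_uD : (0:ℂ) ∈ uD := by simp [uD]
lemma mem_uD {z : ℂ} : z ∈ uD ↔ ‖z‖ < 1 := by simp [uD]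

lemma mul_mem_uD {t : ℝ} (ht0 : 0 ≤ t) (ht1 : t ≤ 1) {z : ℂ} (hz : z ∈ uD) :
    (t:ℂ) * z ∈ uD := by
  rw [mem_uD] at *
  calc ‖(t:ℂ) * z‖ = t * ‖z‖ := by simp [norm_mul, abs_of_nonneg ht0]
    _ ≤ 1 * ‖z‖ := by gcongr
    _ < 1 := by simpa using hz


lemma ofReal_hasDerivAt {t : ℝ} : HasDerivAt (fun s : ℝ => (s:ℂ)) 1 t := by
  simpa using (hasDerivAt_id t).ofReal_comp

lemma contOn_aux {h : ℂ → ℂ} (hcont : ContinuousOn h uD) {x : ℂ} (hx : x ∈ uD) :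
    ContinuousOn (fun t : ℝ => h ((t:ℂ)*x)) (Set.Icc 0 1) := by
  have hmap : Set.MapsTo (fun t : ℝ => (t:ℂ)*x) (Set.Icc 0 1) uD := fun t ht =>
    mul_mem_uD ht.1 ht.2 hx
  exact hcont.comp ((Complex.continuous_ofReal.mul continuous_const).continuousOn) hmap

lemma prim_hasDerivAt {h : ℂ → ℂ} (hh : AnalyticOnNhd ℂ h uD) {w : ℂ} (hw : w ∈ uD) :
    HasDerivAt (prim h) (h w) w := by
  have hw1 : ‖w‖ < 1 := mem_uD.mp hw
  set r : ℝ := (‖w‖ + 1) / 2 with hr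
  have hr1 : r < 1 := by rw [hr]; linarith
  have hwr : ‖w‖ < r := by rw [hr]; linarith
  have hr0 : 0 ≤ r := by positivity
  set ε : ℝ := r - ‖w‖ with hε
  have hε0 : 0 < ε := by rw [hε]; linarith
  have hKu : Metric.closedBall (0:ℂ) r ⊆ uD := by
    intro x hx
    rw [mem_uD]
    have := mem_closedBall_zero_iff.mp hx
    linarith
  have hmem : ∀ t : ℝ, t ∈ Set.Icc (0:ℝ) 1 → ∀ x ∈ ball w ε,
      (t:ℂ) * x ∈ Metric.closedBall (0:ℂ) r := by
    intro t ht x hx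
    have hxr : ‖x‖ < r := by
      have h1 := mem_ball_iff_norm.mp hx
      calc ‖x‖ ≤ ‖x - w‖ + ‖w‖ := by simpa using norm_add_le (x - w) w
        _ < ε + ‖w‖ := by linarith
        _ = r := by rw [hε]; ring
    rw [mem_closedBall_zero_iff]
    calc ‖(t:ℂ) * x‖ = t * ‖x‖ := by simp [norm_mul, abs_of_nonneg ht.1]
      _ ≤ 1 * ‖x‖ := by gcongr; exact ht.2
      _ ≤ r := by simpa using hxr.le
  have hcont : ContinuousOn h uD := hh.continuousOn
  have hdc : AnalyticOnNhd ℂ (deriv h) uD := hh.deriv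
  have hcont' : ContinuousOn (deriv h) uD := hdc.continuousOn
  obtain ⟨B₁, hB₁⟩ := (isCompact_closedBall (0:ℂ) r).exists_bound_of_continuousOn (hcont.mono hKu)
  obtain ⟨B₂, hB₂⟩ := (isCompact_closedBall (0:ℂ) r).exists_bound_of_continuousOn (hcont'.mono hKu)
  set F' : ℂ → ℝ → ℂ := fun x t => h ((t:ℂ) * x) + (t:ℂ) * x * deriv h ((t:ℂ) * x) with hF'
  have key := intervalIntegral.hasDerivAt_integral_of_dominated_loc_of_deriv_le
    (μ := volume) (F := fun x t => x * h ((t:ℂ) * x)) (F' := F') (x₀ := w)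
    (a := 0) (b := 1) (bound := fun _ => B₁ + B₂) (Metric.ball_mem_nhds w hε0) ?_ ?_ ?_ ?_ ?_ ?_
  · -- conclude
    have h2 : (∫ t in (0:ℝ)..1, F' w t) = h w := by
      have hderiv : ∀ t ∈ Set.uIcc (0:ℝ) 1,
          HasDerivAt (fun s : ℝ => (s:ℂ) * h ((s:ℂ) * w)) (F' w t) t := by
        intro t ht
        rw [Set.uIcc_of_le zero_le_one] at ht
        have htw : (t:ℂ) * w ∈ uD := mul_mem_uD ht.1 ht.2 hw
        have hin : HasDerivAt (fun s : ℝ => (s:ℂ) * w) w t := by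
          simpa using ofReal_hasDerivAt.mul_const w
        have hout : HasDerivAt h (deriv h ((t:ℂ) * w)) ((t:ℂ) * w) :=
          ((hh _ htw).differentiableAt).hasDerivAt
        have hcomp : HasDerivAt (fun s : ℝ => h ((s:ℂ) * w)) (w • deriv h ((t:ℂ)*w)) t :=
          hout.scomp t hin
        have := ofReal_hasDerivAt.mul hcomp
        refine this.congr_deriv ?_
        simp [hF']; ring
      have hint' : IntervalIntegrable (F' w) volume 0 1 := by
        apply ContinuousOn.intervalIntegrable
        rw [Set.uIcc_of_le zero_le_one]
        exact (contOn_aux hcont hw).add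
          (((Complex.continuous_ofReal.mul continuous_const).continuousOn).mul
            (contOn_aux hcont' hw))
      have := intervalIntegral.integral_eq_sub_of_hasDerivAt hderiv hint'
      rw [this]; simp
    rw [h2] at key
    exact key.2
  · -- hF_meas
    filter_upwards [Metric.ball_mem_nhds w hε0] with x hx
    have hxu : x ∈ uD := by
      have : x = (1:ℝ) * x := by simp
      have h1 : ((1:ℝ):ℂ) * x ∈ Metric.closedBall (0:ℂ) r := hmem 1 (by norm_num) x hx
      apply hKu; simpa using h1
    apply ContinuousOn.aestronglyMeasurable _ measurableSet_uIoc
    have hsub : Ι (0:ℝ) 1 ⊆ Set.Icc 0 1 := by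
      rw [Set.uIoc_of_le zero_le_one]; exact Set.Ioc_subset_Icc_self
    exact (continuousOn_const.mul (contOn_aux hcont hxu)).mono hsub
  · -- hF_int
    apply ContinuousOn.intervalIntegrable
    rw [Set.uIcc_of_le zero_le_one]
    exact continuousOn_const.mul (contOn_aux hcont hw)
  · -- hF'_meas
    apply ContinuousOn.aestronglyMeasurable _ measurableSet_uIoc
    have hsub : Ι (0:ℝ) 1 ⊆ Set.Icc 0 1 := by
      rw [Set.uIoc_of_le zero_le_one]; exact Set.Ioc_subset_Icc_self
    exact (((contOn_aux hcont hw).add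
      (((Complex.continuous_ofReal.mul continuous_const).continuousOn).mul
        (contOn_aux hcont' hw))).mono hsub)
  · -- h_bound
    apply Filter.Eventually.of_forall
    intro t ht x hx
    rw [Set.uIoc_of_le zero_le_one] at ht
    have htI : t ∈ Set.Icc (0:ℝ) 1 := ⟨ht.1.le, ht.2⟩
    have hK := hmem t htI x hx
    have h1 : ‖h ((t:ℂ)*x)‖ ≤ B₁ := hB₁ _ hK
    have h2 : ‖deriv h ((t:ℂ)*x)‖ ≤ B₂ := hB₂ _ hK
    have h3 : ‖(t:ℂ)*x‖ ≤ 1 := by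
      have := mem_closedBall_zero_iff.mp hK
      linarith
    calc ‖F' x t‖ ≤ ‖h ((t:ℂ)*x)‖ + ‖(t:ℂ)*x * deriv h ((t:ℂ)*x)‖ := norm_add_le _ _
      _ ≤ B₁ + 1 * B₂ := by
          have h4 : ‖(t:ℂ)*x * deriv h ((t:ℂ)*x)‖ ≤ 1 * B₂ := by
            rw [norm_mul]
            exact mul_le_mul h3 h2 (norm_nonneg _) zero_le_one
          exact add_le_add h1 h4
      _ = B₁ + B₂ := by ring
  · exact intervalIntegrable_const
  · -- h_diff
    apply Filter.Eventually.of_forall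
    intro t ht x hx
    rw [Set.uIoc_of_le zero_le_one] at ht
    have htI : t ∈ Set.Icc (0:ℝ) 1 := ⟨ht.1.le, ht.2⟩
    have hK := hKu (hmem t htI x hx)
    have hout : HasDerivAt h (deriv h ((t:ℂ) * x)) ((t:ℂ) * x) :=
      ((hh _ hK).differentiableAt).hasDerivAt
    have hin : HasDerivAt (fun y : ℂ => (t:ℂ) * y) (t:ℂ) x := by
      simpa using (hasDerivAt_id x).const_mul (t:ℂ)
    have hcomp : HasDerivAt (fun y : ℂ => h ((t:ℂ) * y)) (deriv h ((t:ℂ)*x) * (t:ℂ)) x :=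
      HasDerivAt.comp x hout hin
    have := (hasDerivAt_id x).mul hcomp
    refine this.congr_deriv ?_
    simp [hF']; ring

lemma prim_analyticOnNhd {h : ℂ → ℂ} (hh : AnalyticOnNhd ℂ h uD) :
    AnalyticOnNhd ℂ (prim h) uD :=
  DifferentiableOn.analyticOnNhd
    (fun w hw => ((prim_hasDerivAt hh hw).differentiableAt).differentiableWithinAt) uD_open

lemma prim_deriv {h : ℂ → ℂ} (hh : AnalyticOnNhd ℂ h uD) {w : ℂ} (hw : w ∈ uD) :
    deriv (prim h) w = h w := (prim_hasDerivAt hh hw).deriv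




-- new material
lemma comp_hasDerivAt {h φ : ℂ → ℂ} (hφ : AnalyticOnNhd ℂ φ uD) (hφm : Set.MapsTo φ uD uD)
    (hh : AnalyticOnNhd ℂ h uD) {z : ℂ} (hz : z ∈ uD) :
    HasDerivAt (fun z => prim h (φ z)) (h (φ z) * deriv φ z) z :=
  (prim_hasDerivAt hh (hφm hz)).comp z ((hφ z hz).differentiableAt.hasDerivAt)

lemma comp_deriv_eq {h φ : ℂ → ℂ} (hφ : AnalyticOnNhd ℂ φ uD) (hφm : Set.MapsTo φ uD uD)
    (hh : AnalyticOnNhd ℂ h uD) {z : ℂ} (hz : z ∈ uD) :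
    deriv (fun z => prim h (φ z)) z = h (φ z) * deriv φ z :=
  (comp_hasDerivAt hφ hφm hh hz).deriv

lemma comp_deriv2 {h φ : ℂ → ℂ} (hφ : AnalyticOnNhd ℂ φ uD) (hφm : Set.MapsTo φ uD uD)
    (hh : AnalyticOnNhd ℂ h uD) {z : ℂ} (hz : z ∈ uD) :
    deriv (deriv (fun z => prim h (φ z))) z
      = deriv h (φ z) * (deriv φ z)^2 + h (φ z) * deriv (deriv φ) z := by
  have hev : deriv (fun z => prim h (φ z)) =ᶠ[𝓝 z] fun z' => h (φ z') * deriv φ z' := by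
    filter_upwards [uD_open.mem_nhds hz] with z' hz'
    exact comp_deriv_eq hφ hφm hh hz'
  rw [hev.deriv_eq]
  have hA : HasDerivAt (fun z' => h (φ z')) (deriv h (φ z) * deriv φ z) z :=
    HasDerivAt.comp z ((hh _ (hφm hz)).differentiableAt.hasDerivAt)
      ((hφ z hz).differentiableAt.hasDerivAt)
  have hB : HasDerivAt (deriv φ) (deriv (deriv φ) z) z :=
    ((hφ.deriv z hz)).differentiableAt.hasDerivAt
  have := (hA.mul hB).deriv
  rw [show (fun z' => h (φ z') * deriv φ z') = (fun z' => h (φ z')) * deriv φ from rfl, this]; ring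

lemma CphiVg_eq (g φ f : ℂ → ℂ) :
    CphiVg g φ f = fun z => prim (fun w => deriv f w * g w) (φ z) := rfl

lemma T_analytic {φ g f : ℂ → ℂ} (hφ : AnalyticOnNhd ℂ φ uD) (hφm : Set.MapsTo φ uD uD)
    (hg : AnalyticOnNhd ℂ g uD) (hf : AnalyticOnNhd ℂ f uD) :
    AnalyticOnNhd ℂ (CphiVg g φ f) uD := by
  rw [CphiVg_eq]
  exact (prim_analyticOnNhd ((hf.deriv).mul hg)).comp hφ hφm

lemma T_deriv {φ g f : ℂ → ℂ} (hφ : AnalyticOnNhd ℂ φ uD) (hφm : Set.MapsTo φ uD uD)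
    (hg : AnalyticOnNhd ℂ g uD) (hf : AnalyticOnNhd ℂ f uD) {z : ℂ} (hz : z ∈ uD) :
    deriv (CphiVg g φ f) z = deriv f (φ z) * g (φ z) * deriv φ z := by
  rw [CphiVg_eq]
  exact comp_deriv_eq hφ hφm ((hf.deriv).mul hg) hz

lemma T_deriv2 {φ g f : ℂ → ℂ} (hφ : AnalyticOnNhd ℂ φ uD) (hφm : Set.MapsTo φ uD uD)
    (hg : AnalyticOnNhd ℂ g uD) (hf : AnalyticOnNhd ℂ f uD) {z : ℂ} (hz : z ∈ uD) :
    deriv (deriv (CphiVg g φ f)) z =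
      deriv (deriv f) (φ z) * (g (φ z) * (deriv φ z)^2)
        + deriv f (φ z) * (g (φ z) * deriv (deriv φ) z + deriv g (φ z) * (deriv φ z)^2) := by
  rw [CphiVg_eq]
  rw [comp_deriv2 hφ hφm ((hf.deriv).mul hg) hz]
  have hφz : φ z ∈ uD := hφm hz
  have hd : deriv (fun w => deriv f w * g w) (φ z)
      = deriv (deriv f) (φ z) * g (φ z) + deriv f (φ z) * deriv g (φ z) :=
    deriv_mul ((hf.deriv) _ hφz).differentiableAt ((hg) _ hφz).differentiableAt
  rw [hd]; ring



lemma base_pos {z : ℂ} (hz : z ∈ uD) : 0 < 1 - ‖z‖^2 := by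
  have h1 : ‖z‖ < 1 := mem_uD.mp hz
  nlinarith [norm_nonneg z]

lemma zygS_nonneg {a : ℝ} {f : ℂ → ℂ} {z : ℂ} (hz : z ∈ uD) : 0 ≤ zygS a f z :=
  mul_nonneg (Real.rpow_nonneg (base_pos hz).le _) (norm_nonneg _)

section sup
variable {a M : ℝ} {f : ℂ → ℂ} (hM : ∀ z ∈ uD, zygS a f z ≤ M)
include hM

lemma zygS_le_sSup {z : ℂ} (hz : z ∈ uD) : zygS a f z ≤ sSup (zygS a f '' uD) :=
  le_csSup ⟨M, fun _ ⟨x, hx, hxe⟩ => hxe ▸ hM x hx⟩ (Set.mem_image_of_mem _ hz)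

lemma sSup_zygS_nonneg : 0 ≤ sSup (zygS a f '' uD) :=
  le_trans (zygS_nonneg zero_mem_uD) (zygS_le_sSup hM zero_mem_uD)

lemma sSup_zygS_le : sSup (zygS a f '' uD) ≤ M :=
  csSup_le ⟨_, Set.mem_image_of_mem _ zero_mem_uD⟩ (fun _ ⟨x, hx, hxe⟩ => hxe ▸ hM x hx)

lemma zNorm_nonneg : 0 ≤ zNorm a f := by
  have := sSup_zygS_nonneg hM
  unfold zNorm
  positivity

lemma zygS_le_zNorm {z : ℂ} (hz : z ∈ uD) : zygS a f z ≤ zNorm a f := by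
  have h1 := zygS_le_sSup hM hz
  unfold zNorm
  have : (0:ℝ) ≤ ‖f 0‖ + ‖deriv f 0‖ := by positivity
  linarith

lemma norm_deriv_f0_le_zNorm : ‖deriv f 0‖ ≤ zNorm a f := by
  have := sSup_zygS_nonneg hM
  unfold zNorm
  have : (0:ℝ) ≤ ‖f 0‖ := norm_nonneg _
  linarith

lemma zNorm_le : zNorm a f ≤ ‖f 0‖ + ‖deriv f 0‖ + M := by
  have := sSup_zygS_le hM
  unfold zNorm
  linarith

lemma norm_dd_le {z : ℂ} (hz : z ∈ uD) :
    ‖deriv (deriv f) z‖ ≤ M * (1 - ‖z‖^2) ^ (-a) := by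
  have hb := base_pos hz
  have h1 := hM z hz
  unfold zygS at h1
  have hp : 0 < (1 - ‖z‖^2) ^ a := Real.rpow_pos_of_pos hb a
  rw [Real.rpow_neg hb.le, ← div_eq_mul_inv, le_div_iff₀ hp, mul_comm]
  exact h1
end sup

def Iint (α : ℝ) : ℝ := ∫ t in (0:ℝ)..1, (1-t)^(-α)

lemma Iint_nonneg (α : ℝ) : 0 ≤ Iint α := by
  apply intervalIntegral.integral_nonneg zero_le_one
  intro t ht
  exact Real.rpow_nonneg (by linarith [ht.2]) _

lemma Iint_integrable {α : ℝ} (hα1 : α < 1) :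
    IntervalIntegrable (fun t : ℝ => (1-t)^(-α)) volume 0 1 := by
  have h := intervalIntegral.intervalIntegrable_rpow' (a := 0) (b := 1) (r := -α) (by linarith)
  have h2 := h.comp_sub_left 1
  have h3 := h2.symm
  simpa using h3

lemma deriv_f_bound {α M : ℝ} (hα0 : 0 < α) (hα1 : α < 1) {f : ℂ → ℂ}
    (hf : AnalyticOnNhd ℂ f uD) (hM : ∀ z ∈ uD, zygS α f z ≤ M)
    {w : ℂ} (hw : w ∈ uD) :
    ‖deriv f w‖ ≤ ‖deriv f 0‖ + M * Iint α := by
  have hM0 : 0 ≤ M := le_trans (zygS_nonneg zero_mem_uD) (hM 0 zero_mem_uD)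
  have hw1 : ‖w‖ < 1 := mem_uD.mp hw
  set u' : ℝ → ℂ := fun t => w * deriv (deriv f) ((t:ℂ) * w) with hu'
  have hdd : AnalyticOnNhd ℂ (deriv (deriv f)) uD := (hf.deriv).deriv
  have hderiv : ∀ t ∈ Set.uIcc (0:ℝ) 1,
      HasDerivAt (fun s : ℝ => deriv f ((s:ℂ) * w)) (u' t) t := by
    intro t ht
    rw [Set.uIcc_of_le zero_le_one] at ht
    have htw : (t:ℂ) * w ∈ uD := mul_mem_uD ht.1 ht.2 hw
    have hout : HasDerivAt (deriv f) (deriv (deriv f) ((t:ℂ)*w)) ((t:ℂ)*w) :=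
      ((hf.deriv _ htw).differentiableAt).hasDerivAt
    have hin : HasDerivAt (fun s : ℝ => (s:ℂ) * w) w t := by
      simpa using ofReal_hasDerivAt.mul_const w
    have := hout.scomp t hin
    simpa [hu', Function.comp_def] using this
  have hint : IntervalIntegrable u' volume 0 1 := by
    apply ContinuousOn.intervalIntegrable
    rw [Set.uIcc_of_le zero_le_one]
    exact continuousOn_const.mul (contOn_aux hdd.continuousOn hw)
  have hFTC := intervalIntegral.integral_eq_sub_of_hasDerivAt hderiv hint
  have hsub : deriv f w - deriv f 0 = ∫ t in (0:ℝ)..1, u' t := by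
    rw [hFTC]; simp
  have hIpos : (0:ℝ) ≤ ∫ t in (0:ℝ)..1, M * (1-t)^(-α) :=
    intervalIntegral.integral_nonneg zero_le_one
      (fun t ht => mul_nonneg hM0 (Real.rpow_nonneg (by linarith [ht.2]) _))
  have hbound : ‖∫ t in (0:ℝ)..1, u' t‖ ≤ ∫ t in (0:ℝ)..1, M * (1-t)^(-α) := by
    rw [← abs_of_nonneg hIpos]
    apply intervalIntegral.norm_integral_le_abs_of_norm_le
    · -- a.e. bound
      have hne : ∀ᵐ t ∂(volume.restrict (Ι (0:ℝ) 1)), t ≠ 1 := by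
        apply ae_restrict_of_ae
        rw [ae_iff]
        have : {t : ℝ | ¬ t ≠ 1} = {1} := by ext t; simp
        rw [this]
        exact Real.volume_singleton
      filter_upwards [hne, ae_restrict_mem measurableSet_uIoc] with t ht1 htm
      rw [Set.uIoc_of_le zero_le_one] at htm
      have ht0 : 0 ≤ t := htm.1.le
      have htlt : t < 1 := lt_of_le_of_ne htm.2 ht1
      have htw : (t:ℂ) * w ∈ uD := mul_mem_uD ht0 htm.2 hw
      have h1 : ‖deriv (deriv f) ((t:ℂ)*w)‖ ≤ M * (1 - ‖(t:ℂ)*w‖^2) ^ (-α) :=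
        norm_dd_le hM htw
      have hb2 : (0:ℝ) < 1 - t := by linarith
      have hb3 : 1 - t ≤ 1 - ‖(t:ℂ)*w‖^2 := by
        have he : ‖(t:ℂ)*w‖ = t * ‖w‖ := by simp [norm_mul, abs_of_nonneg ht0]
        rw [he]
        have hnn : 0 ≤ t*‖w‖ := mul_nonneg ht0 (norm_nonneg w)
        have h4 : t*‖w‖ ≤ t := by nlinarith [norm_nonneg w]
        have h5 : (t*‖w‖)^2 ≤ t^2 := by nlinarith
        have h6 : t^2 ≤ t := by nlinarith
        linarith
      have h2 : (1 - ‖(t:ℂ)*w‖^2) ^ (-α) ≤ (1-t)^(-α) :=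
        Real.rpow_le_rpow_of_nonpos hb2 hb3 (by linarith)
      calc ‖u' t‖ = ‖w‖ * ‖deriv (deriv f) ((t:ℂ)*w)‖ := by rw [hu']; exact norm_mul _ _
        _ ≤ 1 * (M * (1 - ‖(t:ℂ)*w‖^2) ^ (-α)) := by
            apply mul_le_mul hw1.le h1 (norm_nonneg _) zero_le_one
        _ = M * (1 - ‖(t:ℂ)*w‖^2) ^ (-α) := one_mul _
        _ ≤ M * (1-t)^(-α) := by
            apply mul_le_mul_of_nonneg_left h2 hM0
    · exact (Iint_integrable hα1).const_mul M
  have hc : (∫ t in (0:ℝ)..1, M * (1-t)^(-α)) = M * Iint α := by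
    unfold Iint; exact intervalIntegral.integral_const_mul _ _
  have h7 : ‖deriv f w‖ ≤ ‖deriv f 0‖ + ‖deriv f w - deriv f 0‖ := by
    have := norm_add_le (deriv f 0) (deriv f w - deriv f 0)
    simpa using this
  rw [hsub] at h7
  rw [hc] at hbound
  linarith



section test
variable (α : ℝ) (a : ℂ)

def cc : ℂ := (2:ℂ) - (α:ℂ)
def bb : ℂ := (starRingEnd ℂ) a
def DD : ℂ := (bb a)^2 * (cc α) * (cc α - 1)
def testF : ℂ → ℂ := fun z => (1 - bb a * z) ^ (cc α) / DD α a
def testF' : ℂ → ℂ := fun z => cc α * (1 - bb a * z) ^ (cc α - 1) * (-(bb a)) / DD α a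

variable {α a}
variable (hα0 : 0 < α) (hα1 : α < 1) (ha : a ∈ uD) (ha2 : a ≠ 0)

lemma norm_bb : ‖bb a‖ = ‖a‖ := by simp [bb]

lemma slit {z : ℂ} (hz : z ∈ uD) (ha' : a ∈ uD) : (1 - bb a * z) ∈ Complex.slitPlane := by
  rw [Complex.mem_slitPlane_iff]
  left
  have h1 : ‖bb a * z‖ < 1 := by
    rw [norm_mul, norm_bb]
    have := mem_uD.mp hz
    have h2 := mem_uD.mp ha'
    nlinarith [norm_nonneg a, norm_nonneg z]
  have h2 : (bb a * z).re ≤ ‖bb a * z‖ := by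
    refine le_trans (Complex.re_le_norm _) (le_of_eq ?_)
    simp
  simp only [Complex.sub_re, Complex.one_re]
  linarith

include hα0 hα1 ha2 in
lemma DD_ne : DD α a ≠ 0 := by
  have hb : bb a ≠ 0 := by simp [bb, ha2]
  have hc : cc α ≠ 0 := by
    simp only [cc]
    intro h
    have : ((2:ℝ) - α : ℝ) = 0 := by
      have := congrArg Complex.re h
      simpa using this
    linarith
  have hc1 : cc α - 1 ≠ 0 := by
    simp only [cc]
    intro h
    have : ((2:ℝ) - α - 1 : ℝ) = 0 := by
      have := congrArg Complex.re h
      simpa using this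
    linarith
  simp [DD, hb, hc, hc1]

include ha in
lemma base_hasDerivAt (z : ℂ) : HasDerivAt (fun z : ℂ => 1 - bb a * z) (-(bb a)) z := by
  simpa using ((hasDerivAt_id z).const_mul (bb a)).const_sub 1

include hα0 hα1 ha ha2 in
lemma testF_hasDerivAt {z : ℂ} (hz : z ∈ uD) :
    HasDerivAt (testF α a) (testF' α a z) z := by
  have h1 := (base_hasDerivAt ha z).cpow_const (c := cc α) (slit hz ha)
  exact h1.div_const (DD α a)

include hα0 hα1 ha ha2 in
lemma testF'_hasDerivAt {z : ℂ} (hz : z ∈ uD) :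
    HasDerivAt (testF' α a) ((1 - bb a * z) ^ (-(α:ℂ))) z := by
  have h1 := (base_hasDerivAt ha z).cpow_const (c := cc α - 1) (slit hz ha)
  have h2 := ((h1.const_mul (cc α)).mul_const (-(bb a))).div_const (DD α a)
  refine h2.congr_deriv ?_
  symm
  have he : cc α - 1 - 1 = -(α:ℂ) := by simp [cc]; ring
  rw [he]
  have hD := DD_ne hα0 hα1 ha2
  rw [eq_div_iff hD]
  simp only [DD]
  ring

include hα0 hα1 ha ha2 in
lemma testF_deriv_eq {z : ℂ} (hz : z ∈ uD) :
    deriv (testF α a) z = testF' α a z := (testF_hasDerivAt hα0 hα1 ha ha2 hz).deriv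

include hα0 hα1 ha ha2 in
lemma testF_deriv2 {z : ℂ} (hz : z ∈ uD) :
    deriv (deriv (testF α a)) z = (1 - bb a * z) ^ (-(α:ℂ)) := by
  have hev : deriv (testF α a) =ᶠ[𝓝 z] testF' α a := by
    filter_upwards [uD_open.mem_nhds hz] with z' hz'
    exact testF_deriv_eq hα0 hα1 ha ha2 hz'
  rw [hev.deriv_eq]
  exact (testF'_hasDerivAt hα0 hα1 ha ha2 hz).deriv

include hα0 hα1 ha ha2 in
lemma testF_analytic : AnalyticOnNhd ℂ (testF α a) uD :=
  DifferentiableOn.analyticOnNhd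
    (fun z hz => (testF_hasDerivAt hα0 hα1 ha ha2 hz).differentiableAt.differentiableWithinAt)
    uD_open

lemma base_ne {z : ℂ} (hz : z ∈ uD) (ha' : a ∈ uD) : (1 - bb a * z) ≠ 0 :=
  Complex.slitPlane_ne_zero (slit hz ha')

lemma norm_cpow_real {w : ℂ} (hw : w ≠ 0) (r : ℝ) : ‖w ^ ((r:ℝ):ℂ)‖ = ‖w‖ ^ r := by
  rw [Complex.norm_cpow_of_ne_zero hw]
  simp

include hα0 hα1 ha ha2 in
lemma testF_zygS_le {z : ℂ} (hz : z ∈ uD) : zygS α (testF α a) z ≤ 2 := by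
  rw [zygS, testF_deriv2 hα0 hα1 ha ha2 hz]
  set A := ‖1 - bb a * z‖ with hA
  have hz1 : ‖z‖ < 1 := mem_uD.mp hz
  have ha1 : ‖a‖ < 1 := mem_uD.mp ha
  have hAlow : 1 - ‖z‖ ≤ A := by
    rw [hA]
    have h1 : ‖bb a * z‖ ≤ ‖z‖ := by
      rw [norm_mul, norm_bb]
      nlinarith [norm_nonneg z, norm_nonneg a]
    calc 1 - ‖z‖ ≤ 1 - ‖bb a * z‖ := by linarith
      _ = ‖(1:ℂ)‖ - ‖bb a * z‖ := by rw [norm_one]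
      _ ≤ ‖1 - bb a * z‖ := norm_sub_norm_le _ _
  have hA0 : 0 < A := by linarith
  have hnorm : ‖(1 - bb a * z) ^ (-(α:ℂ))‖ = A ^ (-α) := by
    have : (-(α:ℂ)) = (((-α : ℝ)):ℂ) := by push_cast; ring
    rw [this, norm_cpow_real (base_ne hz ha) (-α)]
  rw [hnorm]
  have hkey : (1 - ‖z‖^2) ^ α ≤ 2 ^ α * A ^ α := by
    have h2A : 1 - ‖z‖^2 ≤ 2 * A := by nlinarith [norm_nonneg z]
    calc (1 - ‖z‖^2) ^ α ≤ (2*A) ^ α :=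
          Real.rpow_le_rpow (base_pos hz).le h2A hα0.le
      _ = 2 ^ α * A ^ α := Real.mul_rpow (by norm_num) hA0.le
  calc (1 - ‖z‖^2) ^ α * A ^ (-α) ≤ (2 ^ α * A ^ α) * A ^ (-α) :=
        mul_le_mul_of_nonneg_right hkey (Real.rpow_nonneg hA0.le _)
    _ = 2 ^ α := by
        rw [mul_assoc, ← Real.rpow_add hA0]
        simp
    _ ≤ 2 := by
        calc (2:ℝ) ^ α ≤ (2:ℝ) ^ (1:ℝ) :=
              Real.rpow_le_rpow_of_exponent_le one_le_two hα1.le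
          _ = 2 := Real.rpow_one 2

lemma base_at_self : 1 - bb a * a = (((1 - ‖a‖^2 : ℝ)):ℂ) := by
  have h1 : bb a * a = ((‖a‖^2 : ℝ) : ℂ) := by
    rw [bb, mul_comm, Complex.mul_conj]
    norm_cast
    rw [Complex.normSq_eq_norm_sq]
  rw [h1]
  push_cast
  ring

lemma norm_cc (hα1' : α < 1) : ‖cc α‖ = 2 - α := by
  have : cc α = (((2 - α : ℝ)):ℂ) := by rw [cc]; push_cast; ring
  rw [this, Complex.norm_real]
  rw [Real.norm_eq_abs, abs_of_pos (by linarith)]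

lemma norm_cc1 (hα1' : α < 1) : ‖cc α - 1‖ = 1 - α := by
  have : cc α - 1 = (((1 - α : ℝ)):ℂ) := by rw [cc]; push_cast; ring
  rw [this, Complex.norm_real]
  rw [Real.norm_eq_abs, abs_of_pos (by linarith)]

lemma norm_DD (hα1' : α < 1) : ‖DD α a‖ = ‖a‖^2 * ((2-α) * (1-α)) := by
  rw [DD, norm_mul, norm_mul, norm_pow, norm_bb, norm_cc hα1', norm_cc1 hα1']
  ring

include hα0 hα1 ha ha2 in
lemma testF_dd_self_norm : ‖deriv (deriv (testF α a)) a‖ = (1-‖a‖^2) ^ (-α) := by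
  rw [testF_deriv2 hα0 hα1 ha ha2 ha, base_at_self]
  have hb := base_pos ha
  have : (-(α:ℂ)) = (((-α : ℝ)):ℂ) := by push_cast; ring
  rw [this, Complex.norm_cpow_eq_rpow_re_of_pos hb]
  simp

include hα1 in
lemma norm_base_cpow_le_one {w : ℂ} (hw : w = (((1 - ‖a‖^2 : ℝ)):ℂ) ∨ w = 1) (ha' : a ∈ uD) :
    ‖w ^ (cc α - 1)‖ ≤ 1 := by
  have hb := base_pos ha'
  rcases hw with hw | hw
  · rw [hw, Complex.norm_cpow_eq_rpow_re_of_pos hb]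
    apply Real.rpow_le_one hb.le
    · nlinarith [norm_nonneg a]
    · simp [cc]; linarith
  · rw [hw, Complex.one_cpow]; simp

include hα0 hα1 ha ha2 in
lemma testF'_bound {w : ℂ} (han : 1/2 ≤ ‖a‖)
    (hw : (1 - bb a * w) = (((1 - ‖a‖^2 : ℝ)):ℂ) ∨ (1 - bb a * w) = 1) :
    ‖testF' α a w‖ ≤ 8 / (1-α) := by
  rw [testF', norm_div, norm_mul, norm_mul, norm_neg, norm_bb, norm_DD hα1, norm_cc hα1]
  have h1 : ‖(1 - bb a * w) ^ (cc α - 1)‖ ≤ 1 := norm_base_cpow_le_one hα1 hw ha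
  have ha1 : ‖a‖ < 1 := mem_uD.mp ha
  have h3 : (0:ℝ) < (2-α)*(1-α) := by nlinarith
  have h4 : (0:ℝ) < ‖a‖^2 := by nlinarith
  have hden : (0:ℝ) < ‖a‖^2 * ((2-α)*(1-α)) := mul_pos h4 h3
  rw [div_le_div_iff₀ hden (by linarith : (0:ℝ) < 1 - α)]
  have hX0 := norm_nonneg ((1 - bb a * w) ^ (cc α - 1))
  have hup : (2-α) * ‖(1 - bb a * w) ^ (cc α - 1)‖ * ‖a‖ ≤ (2-α) * ‖a‖ := by
    have h5 : (2-α) * ‖(1 - bb a * w) ^ (cc α - 1)‖ * ‖a‖ ≤ (2-α) * 1 * ‖a‖ := by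
      gcongr
      linarith
    linarith [h5]
  have key : (0:ℝ) ≤ (2-α)*(1-α)*‖a‖*(8*‖a‖-1) := by
    apply mul_nonneg
    apply mul_nonneg h3.le (norm_nonneg a)
    linarith
  have hup2 : (0:ℝ) ≤ (1-α) := by linarith
  calc (2-α) * ‖(1 - bb a * w) ^ (cc α - 1)‖ * ‖a‖ * (1-α)
      ≤ (2-α) * ‖a‖ * (1-α) := mul_le_mul_of_nonneg_right hup hup2
    _ ≤ 8 * (‖a‖^2 * ((2-α)*(1-α))) := by nlinarith [key]

include hα0 hα1 ha ha2 in
lemma testF_zero_bound (han : 1/2 ≤ ‖a‖) : ‖testF α a 0‖ ≤ 4/(1-α) := by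
  have h0 : testF α a 0 = 1 ^ (cc α) / DD α a := by rw [testF]; norm_num
  rw [h0, Complex.one_cpow, norm_div, norm_one, norm_DD hα1]
  have ha1 : ‖a‖ < 1 := mem_uD.mp ha
  have h3 : (0:ℝ) < (2-α)*(1-α) := by nlinarith
  have h4 : (0:ℝ) < ‖a‖^2 := by nlinarith
  rw [div_le_div_iff₀ (mul_pos h4 h3) (by linarith : (0:ℝ) < 1 - α)]
  have h5 : (1:ℝ)/4 ≤ ‖a‖^2 := by nlinarith
  nlinarith [h5, h3]

include hα0 hα1 ha ha2 in
lemma testF'_zero_bound (han : 1/2 ≤ ‖a‖) : ‖deriv (testF α a) 0‖ ≤ 8/(1-α) := by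
  rw [testF_deriv_eq hα0 hα1 ha ha2 zero_mem_uD]
  apply testF'_bound hα0 hα1 ha ha2 han
  right; norm_num

include hα0 hα1 ha ha2 in
lemma testF'_self_bound (han : 1/2 ≤ ‖a‖) : ‖deriv (testF α a) a‖ ≤ 8/(1-α) := by
  rw [testF_deriv_eq hα0 hα1 ha ha2 ha]
  apply testF'_bound hα0 hα1 ha ha2 han
  left; exact base_at_self

end test

-- ## simple test functions
lemma deriv_idF : deriv (fun z : ℂ => z) = fun _ => (1:ℂ) := by
  funext z; simp

lemma deriv2_id' : deriv (deriv (fun z : ℂ => z)) = fun _ => (0:ℂ) := by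
  rw [deriv_idF]; funext z; simp

lemma memZ_id {a : ℝ} : memZ a (fun z : ℂ => z) := by
  constructor
  · exact (analyticOnNhd_id).analyticOn
  · exact ⟨0, fun z hz => by rw [zygS, deriv2_id']; simp⟩

lemma deriv_q : deriv (fun z : ℂ => z^2/2) = fun z => z := by
  funext z
  have h : HasDerivAt (fun z : ℂ => z^2/2) z z := by
    have := (hasDerivAt_pow 2 z).div_const 2
    norm_num at this
    convert this using 1
  exact h.deriv

lemma deriv2_q : deriv (deriv (fun z : ℂ => z^2/2)) = fun _ => (1:ℂ) := by
  rw [deriv_q]; funext z; simp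

lemma analyticOnNhd_q : AnalyticOnNhd ℂ (fun z : ℂ => z^2/2) uD :=
  DifferentiableOn.analyticOnNhd (Differentiable.differentiableOn (by fun_prop)) uD_open

lemma memZ_q {a : ℝ} (ha : 0 ≤ a) : memZ a (fun z : ℂ => z^2/2) := by
  refine ⟨analyticOnNhd_q.analyticOn, 1, fun z hz => ?_⟩
  rw [zygS, deriv2_q]
  simp only [norm_one, mul_one]
  apply Real.rpow_le_one (base_pos hz).le _ ha
  nlinarith [norm_nonneg z]


lemma forward {α β : ℝ} {φ g : ℂ → ℂ} (hα0 : 0 < α) (hα1 : α < 1) (hβ : 0 < β)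
    (hφ : AnalyticOnNhd ℂ φ uD) (hφm : Set.MapsTo φ uD uD)
    (hg : AnalyticOnNhd ℂ g uD)
    (hB : boundedOp α β (CphiVg g φ)) :
    (memHv β (fun z => g (φ z) * deriv (deriv φ) z + deriv g (φ z) * (deriv φ z) ^ 2) ∧
     (∃ M : ℝ, ∀ z ∈ uD,
        (1 - ‖z‖ ^ 2) ^ β * ‖g (φ z) * (deriv φ z) ^ 2‖ / (1 - ‖φ z‖ ^ 2) ^ α ≤ M)) := by
  obtain ⟨hmap, C, hC0, hC⟩ := hB
  -- condition 1
  obtain ⟨M₁, hM₁⟩ := (hmap _ (memZ_id (a := α))).2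
  have hEbound : ∀ z ∈ uD, (1 - ‖z‖ ^ 2) ^ β *
      ‖g (φ z) * deriv (deriv φ) z + deriv g (φ z) * (deriv φ z) ^ 2‖ ≤ M₁ := by
    intro z hz
    have h2 := T_deriv2 (f := fun z : ℂ => z) hφ hφm hg analyticOnNhd_id hz
    rw [deriv2_id', deriv_idF] at h2
    have h3 := hM₁ z hz
    rw [zygS, h2] at h3
    simpa using h3
  have hM₁0 : 0 ≤ M₁ := le_trans (zygS_nonneg zero_mem_uD) (hM₁ 0 zero_mem_uD)
  refine ⟨⟨M₁, hEbound⟩, ?_⟩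
  -- condition 2, step A
  obtain ⟨M₂, hM₂⟩ := (hmap _ (memZ_q hα0.le)).2
  have hM₂0 : 0 ≤ M₂ := le_trans (zygS_nonneg zero_mem_uD) (hM₂ 0 zero_mem_uD)
  have hGbound : ∀ z ∈ uD, (1 - ‖z‖ ^ 2) ^ β * ‖g (φ z) * (deriv φ z) ^ 2‖ ≤ M₂ + M₁ := by
    intro z hz
    have h2 := T_deriv2 (f := fun z : ℂ => z^2/2) hφ hφm hg analyticOnNhd_q hz
    rw [deriv2_q, deriv_q] at h2
    simp only [one_mul] at h2
    have h3 := hM₂ z hz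
    rw [zygS, h2] at h3
    have hP0 : (0:ℝ) ≤ (1 - ‖z‖ ^ 2) ^ β := Real.rpow_nonneg (base_pos hz).le β
    have h4 : ‖g (φ z) * (deriv φ z) ^ 2‖
        ≤ ‖g (φ z) * (deriv φ z) ^ 2 +
            φ z * (g (φ z) * deriv (deriv φ) z + deriv g (φ z) * (deriv φ z) ^ 2)‖
          + ‖φ z‖ * ‖g (φ z) * deriv (deriv φ) z + deriv g (φ z) * (deriv φ z) ^ 2‖ := by
      have h4a := norm_sub_le
        (g (φ z) * (deriv φ z) ^ 2 +
          φ z * (g (φ z) * deriv (deriv φ) z + deriv g (φ z) * (deriv φ z) ^ 2))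
        (φ z * (g (φ z) * deriv (deriv φ) z + deriv g (φ z) * (deriv φ z) ^ 2))
      rw [add_sub_cancel_right, norm_mul (φ z)] at h4a
      exact h4a
    have h5 : (1 - ‖z‖ ^ 2) ^ β *
        (‖φ z‖ * ‖g (φ z) * deriv (deriv φ) z + deriv g (φ z) * (deriv φ z) ^ 2‖) ≤ M₁ := by
      have hφ1 : ‖φ z‖ ≤ 1 := (mem_uD.mp (hφm hz)).le
      have hEz := hEbound z hz
      have hE0 : (0:ℝ) ≤ ‖g (φ z) * deriv (deriv φ) z + deriv g (φ z) * (deriv φ z) ^ 2‖ :=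
        norm_nonneg _
      calc (1 - ‖z‖ ^ 2) ^ β * (‖φ z‖ * ‖g (φ z) * deriv (deriv φ) z + deriv g (φ z) * (deriv φ z) ^ 2‖)
          ≤ (1 - ‖z‖ ^ 2) ^ β * (1 * ‖g (φ z) * deriv (deriv φ) z + deriv g (φ z) * (deriv φ z) ^ 2‖) := by
            apply mul_le_mul_of_nonneg_left _ hP0
            apply mul_le_mul_of_nonneg_right hφ1 hE0
        _ = (1 - ‖z‖ ^ 2) ^ β * ‖g (φ z) * deriv (deriv φ) z + deriv g (φ z) * (deriv φ z) ^ 2‖ := by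
            ring
        _ ≤ M₁ := hEz
    calc (1 - ‖z‖ ^ 2) ^ β * ‖g (φ z) * (deriv φ z) ^ 2‖
        ≤ (1 - ‖z‖ ^ 2) ^ β * (‖g (φ z) * (deriv φ z) ^ 2 +
            φ z * (g (φ z) * deriv (deriv φ) z + deriv g (φ z) * (deriv φ z) ^ 2)‖
          + ‖φ z‖ * ‖g (φ z) * deriv (deriv φ) z + deriv g (φ z) * (deriv φ z) ^ 2‖) :=
          mul_le_mul_of_nonneg_left h4 hP0
      _ = (1 - ‖z‖ ^ 2) ^ β * ‖g (φ z) * (deriv φ z) ^ 2 +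
            φ z * (g (φ z) * deriv (deriv φ) z + deriv g (φ z) * (deriv φ z) ^ 2)‖
          + (1 - ‖z‖ ^ 2) ^ β * (‖φ z‖ * ‖g (φ z) * deriv (deriv φ) z + deriv g (φ z) * (deriv φ z) ^ 2‖) := by
          ring
      _ ≤ M₂ + M₁ := add_le_add h3 h5
  -- condition 2, step B
  have h1α : (0:ℝ) < 1 - α := by linarith
  have hC14 : (0:ℝ) ≤ C * (14/(1-α)) := by positivity
  have h8M : (0:ℝ) ≤ (8/(1-α)) * M₁ := by positivity
  refine ⟨(4/3)*(M₂+M₁) + (C * (14/(1-α)) + (8/(1-α)) * M₁), fun z hz => ?_⟩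
  have haD : φ z ∈ uD := hφm hz
  have hd0 : (0:ℝ) < 1 - ‖φ z‖^2 := base_pos haD
  have hP0 : (0:ℝ) ≤ (1 - ‖z‖ ^ 2) ^ β := Real.rpow_nonneg (base_pos hz).le β
  by_cases hcase : (1:ℝ)/2 ≤ ‖φ z‖
  · -- big |φ z| : use the cpow test function
    have ha2 : φ z ≠ 0 := by
      intro h
      rw [h] at hcase
      norm_num at hcase
    have hfa : memZ α (testF α (φ z)) :=
      ⟨(testF_analytic hα0 hα1 haD ha2).analyticOn, 2,
        fun w hw => testF_zygS_le hα0 hα1 haD ha2 hw⟩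
    obtain ⟨Mt, hMt⟩ := (hmap _ hfa).2
    have hZtest : zNorm α (testF α (φ z)) ≤ 14/(1-α) := by
      have h6 := zNorm_le (fun w hw => testF_zygS_le hα0 hα1 haD ha2 hw)
      have h7 := testF_zero_bound hα0 hα1 haD ha2 hcase
      have h8 := testF'_zero_bound hα0 hα1 haD ha2 hcase
      have h9 : (2:ℝ) ≤ 2/(1-α) := by
        rw [le_div_iff₀ h1α]; nlinarith
      have h10 : 4/(1-α) + 8/(1-α) + 2/(1-α) = 14/(1-α) := by ring
      linarith
    have hzy : zygS β (CphiVg g φ (testF α (φ z))) z ≤ C * (14/(1-α)) := by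
      calc zygS β (CphiVg g φ (testF α (φ z))) z
          ≤ zNorm β (CphiVg g φ (testF α (φ z))) := zygS_le_zNorm hMt hz
        _ ≤ C * zNorm α (testF α (φ z)) := hC _ hfa
        _ ≤ C * (14/(1-α)) := by
            apply mul_le_mul_of_nonneg_left hZtest hC0.le
    have h2 := T_deriv2 (f := testF α (φ z)) hφ hφm hg (testF_analytic hα0 hα1 haD ha2) hz
    have hdd : ‖deriv (deriv (testF α (φ z))) (φ z)‖ = (1-‖φ z‖^2) ^ (-α) :=
      testF_dd_self_norm hα0 hα1 haD ha2
    have hkey : (1-‖φ z‖^2) ^ (-α) * ‖g (φ z) * (deriv φ z) ^ 2‖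
        ≤ ‖deriv (deriv (CphiVg g φ (testF α (φ z)))) z‖
          + ‖deriv (testF α (φ z)) (φ z)‖ *
            ‖g (φ z) * deriv (deriv φ) z + deriv g (φ z) * (deriv φ z) ^ 2‖ := by
      rw [← hdd, ← norm_mul, ← norm_mul]
      calc ‖deriv (deriv (testF α (φ z))) (φ z) * (g (φ z) * (deriv φ z) ^ 2)‖
          = ‖deriv (deriv (CphiVg g φ (testF α (φ z)))) z -
              deriv (testF α (φ z)) (φ z) *
                (g (φ z) * deriv (deriv φ) z + deriv g (φ z) * (deriv φ z) ^ 2)‖ := by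
            rw [h2]; ring_nf
        _ ≤ _ := norm_sub_le _ _
    -- multiply by the weight
    have hmul : (1 - ‖z‖ ^ 2) ^ β * ((1-‖φ z‖^2) ^ (-α) * ‖g (φ z) * (deriv φ z) ^ 2‖)
        ≤ C * (14/(1-α)) + (8/(1-α)) * M₁ := by
      have hterm2 : (1 - ‖z‖ ^ 2) ^ β * (‖deriv (testF α (φ z)) (φ z)‖ *
          ‖g (φ z) * deriv (deriv φ) z + deriv g (φ z) * (deriv φ z) ^ 2‖)
            ≤ (8/(1-α)) * M₁ := by
        have hb1 := testF'_self_bound hα0 hα1 haD ha2 hcase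
        have hb2 := hEbound z hz
        calc (1 - ‖z‖ ^ 2) ^ β * (‖deriv (testF α (φ z)) (φ z)‖ *
            ‖g (φ z) * deriv (deriv φ) z + deriv g (φ z) * (deriv φ z) ^ 2‖)
            = ‖deriv (testF α (φ z)) (φ z)‖ * ((1 - ‖z‖ ^ 2) ^ β *
              ‖g (φ z) * deriv (deriv φ) z + deriv g (φ z) * (deriv φ z) ^ 2‖) := by ring
          _ ≤ (8/(1-α)) * M₁ := by
              apply mul_le_mul hb1 hb2 (by positivity) (by positivity)
      calc (1 - ‖z‖ ^ 2) ^ β * ((1-‖φ z‖^2) ^ (-α) * ‖g (φ z) * (deriv φ z) ^ 2‖)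
          ≤ (1 - ‖z‖ ^ 2) ^ β * (‖deriv (deriv (CphiVg g φ (testF α (φ z)))) z‖
            + ‖deriv (testF α (φ z)) (φ z)‖ *
              ‖g (φ z) * deriv (deriv φ) z + deriv g (φ z) * (deriv φ z) ^ 2‖) :=
            mul_le_mul_of_nonneg_left hkey hP0
        _ = zygS β (CphiVg g φ (testF α (φ z))) z
            + (1 - ‖z‖ ^ 2) ^ β * (‖deriv (testF α (φ z)) (φ z)‖ *
              ‖g (φ z) * deriv (deriv φ) z + deriv g (φ z) * (deriv φ z) ^ 2‖) := by
            rw [zygS]; ring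
        _ ≤ C * (14/(1-α)) + (8/(1-α)) * M₁ := add_le_add hzy hterm2
    have hgoal : (1 - ‖z‖ ^ 2) ^ β * ‖g (φ z) * (deriv φ z) ^ 2‖ / (1 - ‖φ z‖ ^ 2) ^ α
        = (1 - ‖z‖ ^ 2) ^ β * ((1-‖φ z‖^2) ^ (-α) * ‖g (φ z) * (deriv φ z) ^ 2‖) := by
      rw [Real.rpow_neg hd0.le, div_eq_mul_inv]
      ring
    rw [hgoal]
    have h43 : (0:ℝ) ≤ (4/3)*(M₂+M₁) := by positivity
    linarith
  · -- small |φ z|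
    push_neg at hcase
    have hden : (3:ℝ)/4 ≤ (1-‖φ z‖^2)^α := by
      have h1 : (3:ℝ)/4 ≤ 1-‖φ z‖^2 := by nlinarith [norm_nonneg (φ z)]
      have h2 : ((3:ℝ)/4)^α ≤ (1-‖φ z‖^2)^α :=
        Real.rpow_le_rpow (by norm_num) h1 hα0.le
      have h3 : ((3:ℝ)/4) ≤ ((3:ℝ)/4)^α := by
        have := Real.rpow_le_rpow_of_exponent_ge (x := (3:ℝ)/4) (by norm_num) (by norm_num) hα1.le
        rwa [Real.rpow_one] at this
      linarith
    have hNle := hGbound z hz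
    have hN0 : (0:ℝ) ≤ (1 - ‖z‖ ^ 2) ^ β * ‖g (φ z) * (deriv φ z) ^ 2‖ :=
      mul_nonneg hP0 (norm_nonneg _)
    have hD : (1 - ‖z‖ ^ 2) ^ β * ‖g (φ z) * (deriv φ z) ^ 2‖ / (1 - ‖φ z‖ ^ 2) ^ α
        ≤ (M₂+M₁) / (3/4) :=
      div_le_div₀ (by linarith) hNle (by norm_num) hden
    have heq : (M₂+M₁) / ((3:ℝ)/4) = (4/3)*(M₂+M₁) := by ring
    rw [heq] at hD
    linarith


lemma backward {α β : ℝ} {φ g : ℂ → ℂ} (hα0 : 0 < α) (hα1 : α < 1) (hβ : 0 < β)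
    (hφ : AnalyticOnNhd ℂ φ uD) (hφm : Set.MapsTo φ uD uD)
    (hg : AnalyticOnNhd ℂ g uD)
    (h1 : memHv β (fun z => g (φ z) * deriv (deriv φ) z + deriv g (φ z) * (deriv φ z) ^ 2))
    (h2 : ∃ M : ℝ, ∀ z ∈ uD,
      (1 - ‖z‖ ^ 2) ^ β * ‖g (φ z) * (deriv φ z) ^ 2‖ / (1 - ‖φ z‖ ^ 2) ^ α ≤ M) :
    boundedOp α β (CphiVg g φ) := by
  obtain ⟨M₁, hM₁⟩ := h1
  obtain ⟨M₂, hM₂⟩ := h2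
  have hM₁0 : 0 ≤ M₁ := by
    have h0 := hM₁ 0 zero_mem_uD
    have he : ((1:ℝ) - ‖(0:ℂ)‖^2)^β = 1 := by norm_num
    rw [he, one_mul] at h0
    exact le_trans (norm_nonneg _) h0
  have hM₂0 : 0 ≤ M₂ := by
    refine le_trans ?_ (hM₂ 0 zero_mem_uD)
    apply div_nonneg (mul_nonneg (Real.rpow_nonneg (base_pos zero_mem_uD).le _) (norm_nonneg _))
      (Real.rpow_nonneg (base_pos (hφm zero_mem_uD)).le _)
  have hIα0 : 0 ≤ Iint α := Iint_nonneg α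
  -- pointwise second-derivative bound for the image
  have hzygT : ∀ f : ℂ → ℂ, memZ α f → ∀ z ∈ uD,
      zygS β (CphiVg g φ f) z ≤ zNorm α f * M₂ + (zNorm α f * (1 + Iint α)) * M₁ := by
    intro f hf z hz
    obtain ⟨hfa, Mf', hMf'⟩ := hf
    have hfN : AnalyticOnNhd ℂ f uD := (uD_open.analyticOn_iff_analyticOnNhd).mp hfa
    have hsupb : ∀ w ∈ uD, zygS α f w ≤ sSup (zygS α f '' uD) := fun w hw => zygS_le_sSup hMf' hw
    have hMf0 : 0 ≤ sSup (zygS α f '' uD) := sSup_zygS_nonneg hMf'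
    have hMfN : sSup (zygS α f '' uD) ≤ zNorm α f := by
      unfold zNorm
      have h01 := norm_nonneg (f 0)
      have h02 := norm_nonneg (deriv f 0)
      linarith
    have hN0 : 0 ≤ zNorm α f := zNorm_nonneg hMf'
    have hdf0 : ‖deriv f 0‖ ≤ zNorm α f := norm_deriv_f0_le_zNorm hMf'
    have haD : φ z ∈ uD := hφm hz
    have hd0 : (0:ℝ) < 1 - ‖φ z‖^2 := base_pos haD
    have hP0 : (0:ℝ) ≤ (1 - ‖z‖ ^ 2) ^ β := Real.rpow_nonneg (base_pos hz).le β
    have hdd : ‖deriv (deriv f) (φ z)‖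
        ≤ sSup (zygS α f '' uD) * (1 - ‖φ z‖^2) ^ (-α) := norm_dd_le hsupb haD
    have hdf : ‖deriv f (φ z)‖ ≤ zNorm α f * (1 + Iint α) := by
      have h3 := deriv_f_bound hα0 hα1 hfN hsupb haD
      have h4 : sSup (zygS α f '' uD) * Iint α ≤ zNorm α f * Iint α :=
        mul_le_mul_of_nonneg_right hMfN hIα0
      nlinarith
    have hT2 := T_deriv2 hφ hφm hg hfN hz
    rw [zygS, hT2]
    have hsplit : ‖deriv (deriv f) (φ z) * (g (φ z) * (deriv φ z) ^ 2) +
        deriv f (φ z) * (g (φ z) * deriv (deriv φ) z + deriv g (φ z) * (deriv φ z) ^ 2)‖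
        ≤ ‖deriv (deriv f) (φ z)‖ * ‖g (φ z) * (deriv φ z) ^ 2‖ +
          ‖deriv f (φ z)‖ * ‖g (φ z) * deriv (deriv φ) z + deriv g (φ z) * (deriv φ z) ^ 2‖ := by
      refine le_trans (norm_add_le _ _) ?_
      rw [norm_mul (deriv (deriv f) (φ z)), norm_mul (deriv f (φ z))]
    have hterm1 : (1 - ‖z‖ ^ 2) ^ β *
        (‖deriv (deriv f) (φ z)‖ * ‖g (φ z) * (deriv φ z) ^ 2‖) ≤ zNorm α f * M₂ := by
      have hQ := hM₂ z hz
      have hQ0 : 0 ≤ (1 - ‖z‖ ^ 2) ^ β * ‖g (φ z) * (deriv φ z) ^ 2‖ / (1 - ‖φ z‖ ^ 2) ^ α := by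
        apply div_nonneg (mul_nonneg hP0 (norm_nonneg _)) (Real.rpow_nonneg hd0.le _)
      calc (1 - ‖z‖ ^ 2) ^ β * (‖deriv (deriv f) (φ z)‖ * ‖g (φ z) * (deriv φ z) ^ 2‖)
          ≤ (1 - ‖z‖ ^ 2) ^ β *
            ((sSup (zygS α f '' uD) * (1 - ‖φ z‖^2) ^ (-α)) * ‖g (φ z) * (deriv φ z) ^ 2‖) := by
            apply mul_le_mul_of_nonneg_left _ hP0
            exact mul_le_mul_of_nonneg_right hdd (norm_nonneg _)
        _ = sSup (zygS α f '' uD) *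
            ((1 - ‖z‖ ^ 2) ^ β * ‖g (φ z) * (deriv φ z) ^ 2‖ / (1 - ‖φ z‖ ^ 2) ^ α) := by
            rw [Real.rpow_neg hd0.le, div_eq_mul_inv]
            ring
        _ ≤ zNorm α f * M₂ := by
            apply mul_le_mul hMfN hQ hQ0 hN0
    have hterm2 : (1 - ‖z‖ ^ 2) ^ β * (‖deriv f (φ z)‖ *
        ‖g (φ z) * deriv (deriv φ) z + deriv g (φ z) * (deriv φ z) ^ 2‖)
          ≤ (zNorm α f * (1 + Iint α)) * M₁ := by
      have hE := hM₁ z hz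
      calc (1 - ‖z‖ ^ 2) ^ β * (‖deriv f (φ z)‖ *
          ‖g (φ z) * deriv (deriv φ) z + deriv g (φ z) * (deriv φ z) ^ 2‖)
          = ‖deriv f (φ z)‖ * ((1 - ‖z‖ ^ 2) ^ β *
            ‖g (φ z) * deriv (deriv φ) z + deriv g (φ z) * (deriv φ z) ^ 2‖) := by ring
        _ ≤ (zNorm α f * (1 + Iint α)) * M₁ := by
            apply mul_le_mul hdf hE (mul_nonneg hP0 (norm_nonneg _)) (by positivity)
    calc (1 - ‖z‖ ^ 2) ^ β * ‖deriv (deriv f) (φ z) * (g (φ z) * (deriv φ z) ^ 2) +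
          deriv f (φ z) * (g (φ z) * deriv (deriv φ) z + deriv g (φ z) * (deriv φ z) ^ 2)‖
        ≤ (1 - ‖z‖ ^ 2) ^ β *
          (‖deriv (deriv f) (φ z)‖ * ‖g (φ z) * (deriv φ z) ^ 2‖ +
            ‖deriv f (φ z)‖ * ‖g (φ z) * deriv (deriv φ) z + deriv g (φ z) * (deriv φ z) ^ 2‖) :=
          mul_le_mul_of_nonneg_left hsplit hP0
      _ = (1 - ‖z‖ ^ 2) ^ β * (‖deriv (deriv f) (φ z)‖ * ‖g (φ z) * (deriv φ z) ^ 2‖) +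
          (1 - ‖z‖ ^ 2) ^ β * (‖deriv f (φ z)‖ *
            ‖g (φ z) * deriv (deriv φ) z + deriv g (φ z) * (deriv φ z) ^ 2‖) := by ring
      _ ≤ zNorm α f * M₂ + (zNorm α f * (1 + Iint α)) * M₁ := add_le_add hterm1 hterm2
  -- membership part
  have hmem : ∀ f : ℂ → ℂ, memZ α f → memZ β (CphiVg g φ f) := by
    intro f hf
    have hfN : AnalyticOnNhd ℂ f uD := (uD_open.analyticOn_iff_analyticOnNhd).mp hf.1
    exact ⟨(T_analytic hφ hφm hg hfN).analyticOn,
      zNorm α f * M₂ + (zNorm α f * (1 + Iint α)) * M₁, hzygT f hf⟩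
  refine ⟨hmem, ?_⟩
  -- constants
  obtain ⟨Kg, hKg⟩ := (isCompact_Icc (a := (0:ℝ)) (b := 1)).exists_bound_of_continuousOn
    (contOn_aux hg.continuousOn (hφm zero_mem_uD))
  set Kg' : ℝ := max Kg 0 with hKg'
  have hKg'0 : 0 ≤ Kg' := le_max_right _ _
  set Kg2 : ℝ := ‖g (φ 0) * deriv φ 0‖ with hKg2
  have hKg20 : 0 ≤ Kg2 := norm_nonneg _
  set C₀ : ℝ := Kg' * (1 + Iint α) + Kg2 * (1 + Iint α) + (M₂ + (1 + Iint α) * M₁) with hC₀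
  have hC₀0 : 0 ≤ C₀ := by positivity
  refine ⟨C₀ + 1, by linarith, ?_⟩
  intro f hf
  have hfN : AnalyticOnNhd ℂ f uD := (uD_open.analyticOn_iff_analyticOnNhd).mp hf.1
  obtain ⟨hfa, Mf', hMf'⟩ := hf
  have hsupb : ∀ w ∈ uD, zygS α f w ≤ sSup (zygS α f '' uD) := fun w hw => zygS_le_sSup hMf' hw
  have hMf0 : 0 ≤ sSup (zygS α f '' uD) := sSup_zygS_nonneg hMf'
  have hMfN : sSup (zygS α f '' uD) ≤ zNorm α f := by
    unfold zNorm
    have h01 := norm_nonneg (f 0)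
    have h02 := norm_nonneg (deriv f 0)
    linarith
  have hN0 : 0 ≤ zNorm α f := zNorm_nonneg hMf'
  have hdf0 : ‖deriv f 0‖ ≤ zNorm α f := norm_deriv_f0_le_zNorm hMf'
  have hDf : ∀ w ∈ uD, ‖deriv f w‖ ≤ zNorm α f * (1 + Iint α) := by
    intro w hw
    have h3 := deriv_f_bound hα0 hα1 hfN hsupb hw
    have h4 : sSup (zygS α f '' uD) * Iint α ≤ zNorm α f * Iint α :=
      mul_le_mul_of_nonneg_right hMfN hIα0
    nlinarith
  -- bound on value at 0
  have hT0 : ‖CphiVg g φ f 0‖ ≤ zNorm α f * (1 + Iint α) * Kg' := by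
    rw [CphiVg]
    have hb : ∀ t ∈ Ι (0:ℝ) 1,
        ‖φ 0 * (deriv f ((t:ℂ) * φ 0) * g ((t:ℂ) * φ 0))‖ ≤ zNorm α f * (1 + Iint α) * Kg' := by
      intro t ht
      rw [Set.uIoc_of_le zero_le_one] at ht
      have htm : (t:ℂ) * φ 0 ∈ uD := mul_mem_uD ht.1.le ht.2 (hφm zero_mem_uD)
      have hg1 : ‖g ((t:ℂ) * φ 0)‖ ≤ Kg' := le_trans (hKg _ ⟨ht.1.le, ht.2⟩) (le_max_left _ _)
      have hdf1 : ‖deriv f ((t:ℂ) * φ 0)‖ ≤ zNorm α f * (1 + Iint α) := hDf _ htm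
      have hφ01 : ‖φ 0‖ ≤ 1 := (mem_uD.mp (hφm zero_mem_uD)).le
      calc ‖φ 0 * (deriv f ((t:ℂ) * φ 0) * g ((t:ℂ) * φ 0))‖
          = ‖φ 0‖ * (‖deriv f ((t:ℂ) * φ 0)‖ * ‖g ((t:ℂ) * φ 0)‖) := by
            rw [norm_mul, norm_mul]
        _ ≤ 1 * (zNorm α f * (1 + Iint α) * Kg') := by
            apply mul_le_mul hφ01 _ (by positivity) zero_le_one
            apply mul_le_mul hdf1 hg1 (norm_nonneg _) (by positivity)
        _ = zNorm α f * (1 + Iint α) * Kg' := one_mul _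
    have := intervalIntegral.norm_integral_le_of_norm_le_const hb
    simpa using this
  -- bound on derivative at 0
  have hT1 : ‖deriv (CphiVg g φ f) 0‖ ≤ zNorm α f * (1 + Iint α) * Kg2 := by
    rw [T_deriv hφ hφm hg hfN zero_mem_uD]
    rw [mul_assoc, norm_mul]
    calc ‖deriv f (φ 0)‖ * ‖g (φ 0) * deriv φ 0‖
        ≤ (zNorm α f * (1 + Iint α)) * Kg2 :=
          mul_le_mul (hDf _ (hφm zero_mem_uD)) (le_refl Kg2) hKg20 (by positivity)
      _ = zNorm α f * (1 + Iint α) * Kg2 := by ring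
  -- bound on the sup
  have hTsup : sSup (zygS β (CphiVg g φ f) '' uD)
      ≤ zNorm α f * M₂ + (zNorm α f * (1 + Iint α)) * M₁ := by
    apply csSup_le ⟨_, Set.mem_image_of_mem _ zero_mem_uD⟩
    rintro x ⟨w, hw, rfl⟩
    exact hzygT f ⟨hfa, Mf', hMf'⟩ w hw
  have hfinal : zNorm β (CphiVg g φ f) ≤ zNorm α f * C₀ := by
    have hzn : zNorm β (CphiVg g φ f) = ‖CphiVg g φ f 0‖ + ‖deriv (CphiVg g φ f) 0‖ +
        sSup (zygS β (CphiVg g φ f) '' uD) := rfl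
    rw [hzn]
    have hexp : zNorm α f * C₀ = zNorm α f * (1 + Iint α) * Kg' +
        zNorm α f * (1 + Iint α) * Kg2 +
        (zNorm α f * M₂ + (zNorm α f * (1 + Iint α)) * M₁) := by
      rw [hC₀]; ring
    rw [hexp]
    exact add_le_add (add_le_add hT0 hT1) hTsup
  calc zNorm β (CphiVg g φ f) ≤ zNorm α f * C₀ := hfinal
    _ ≤ (C₀ + 1) * zNorm α f := by nlinarith


theorem stmt_3 (α β : ℝ) (hα0 : 0 < α) (hα1 : α < 1) (hβ : 0 < β)
    (φ g : ℂ → ℂ) (hφ : AnalyticOn ℂ φ uD) (hφm : Set.MapsTo φ uD uD)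
    (hg : AnalyticOn ℂ g uD) :
    boundedOp α β (CphiVg g φ) ↔
      (memHv β (fun z => g (φ z) * deriv (deriv φ) z + deriv g (φ z) * (deriv φ z) ^ 2) ∧ (∃ M : ℝ, ∀ z ∈ uD, (1 - ‖z‖ ^ 2) ^ β * ‖g (φ z) * (deriv φ z) ^ 2‖ / (1 - ‖φ z‖ ^ 2) ^ α ≤ M)) := by
  have hφN : AnalyticOnNhd ℂ φ uD := (uD_open.analyticOn_iff_analyticOnNhd).mp hφ
  have hgN : AnalyticOnNhd ℂ g uD := (uD_open.analyticOn_iff_analyticOnNhd).mp hg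
  constructor
  · intro hB
    exact forward hα0 hα1 hβ hφN hφm hgN hB
  · rintro ⟨h1, h2⟩
    exact backward hα0 hα1 hβ hφN hφm hgN h1 h2
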